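/- Let g_1, …, g_k be pairwise distinct monic irreducible polynomials in F_q[X] with nonzero constant terms, let b_i ≥ 1, set n_i' = b_i·deg(g_i) and n = n_1' + ⋯ + n_k'. For each i and each a ∈ F_q^{n_i'}, let seq_i(a) denote the unique sequence in Ω(g_i^{b_i}) whose first n_i' entries equal a. Then the F_q-linear map F_q^{n_1'} × ⋯ × F_q^{n_k'} → F_q^n sending (a_1, …, a_k) to the vector of the first n entries of seq_1(a_1) + ⋯ + seq_k(a_k) is a linear isomorphism (equivalently, the associated n × n matrix P over F_q has full rank n). -/

import Mathlib

open Polynomial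

/-- The (left) shift operator `L` on sequences over `F`, as an `F`-linear endomorphism. -/
def shiftL (F : Type*) [CommSemiring F] : Module.End F (ℕ → F) where
  toFun s := fun i => s (i + 1)
  map_add' _ _ := rfl
  map_smul' _ _ := rfl

/-- For a polynomial `f`, the operator `f(L)` on sequences. -/
noncomputable def polyL {F : Type*} [CommSemiring F] (f : Polynomial F) :
    Module.End F (ℕ → F) :=
  Polynomial.aeval (shiftL F) f

/-- `Ω(f)`: the set of sequences annihilated by `f(L)`. -/
def OmegaSet {F : Type*} [CommSemiring F] (f : Polynomial F) : Set (ℕ → F) :=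
  {s | polyL f s = 0}

/-- Two sequences are shift equivalent if one is a shift of the other. -/
def ShiftEquiv {F : Type*} [CommSemiring F] (s s' : ℕ → F) : Prop :=
  ∃ ℓ : ℕ, s' = (shiftL F ^ ℓ) s

/-- The cycle (shift-equivalence class) of a sequence. -/
def seqCycle {F : Type*} [CommSemiring F] (s : ℕ → F) : Set (ℕ → F) :=
  {s' | ∃ ℓ : ℕ, s' = (shiftL F ^ ℓ) s}

/-- `N` is the least period of the sequence `s`. -/
def IsLeastPeriod {F : Type*} (s : ℕ → F) (N : ℕ) : Prop :=
  0 < N ∧ (∀ i, s (i + N) = s i) ∧ ∀ M : ℕ, 0 < M → (∀ i, s (i + M) = s i) → N ≤ M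

/-- `h` is the minimal polynomial of the sequence `s`: it is monic, annihilates `s`,
and divides every polynomial annihilating `s`. -/
def IsMinPolyOfSeq {F : Type*} [CommSemiring F] (s : ℕ → F) (h : Polynomial F) : Prop :=
  h.Monic ∧ polyL h s = 0 ∧ ∀ h' : Polynomial F, polyL h' s = 0 → h ∣ h'

/-- `e = ord(f)`: the least `N ≥ 1` with `f ∣ X^N - 1`. -/
def IsOrderOf {F : Type*} [CommRing F] (f : Polynomial F) (e : ℕ) : Prop :=
  0 < e ∧ f ∣ X ^ e - 1 ∧ ∀ N : ℕ, 0 < N → f ∣ X ^ N - 1 → e ≤ N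

lemma shiftL_pow_apply {F : Type*} [CommSemiring F] (t : ℕ) (s : ℕ → F) (i : ℕ) :
    ((shiftL F ^ t) s) i = s (i + t) := by
  induction t generalizing s i with
  | zero => simp
  | succ t ih =>
    rw [pow_succ]
    show ((shiftL F ^ t) (shiftL F s)) i = _
    rw [ih]
    show s (i + t + 1) = _
    ring_nf

lemma polyL_apply {F : Type*} [CommSemiring F] (f : Polynomial F) (s : ℕ → F) (i : ℕ) :
    polyL f s i = ∑ t ∈ Finset.range (f.natDegree + 1), f.coeff t * s (i + t) := by
  rw [polyL, Polynomial.aeval_eq_sum_range]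
  simp only [LinearMap.coe_sum, Finset.sum_apply, LinearMap.smul_apply, Pi.smul_apply,
    shiftL_pow_apply, smul_eq_mul]

lemma polyL_mul {F : Type*} [CommSemiring F] (p q : Polynomial F) (s : ℕ → F) :
    polyL (p * q) s = polyL p (polyL q s) := by
  rw [polyL, polyL, polyL, map_mul]; rfl

lemma omega_unique_zero {F : Type*} [Field F] (f : Polynomial F) (hf : f.Monic) (s : ℕ → F)
    (hs : s ∈ OmegaSet f) (h0 : ∀ j, j < f.natDegree → s j = 0) : s = 0 := by
  set d := f.natDegree with hd
  funext j
  induction j using Nat.strong_induction_on with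
  | _ j ih =>
    by_cases hj : j < d
    · exact h0 j hj
    · push_neg at hj
      have hz : polyL f s (j - d) = 0 := congrFun hs (j - d)
      rw [polyL_apply, Finset.sum_range_succ] at hz
      have h1 : ∀ t ∈ Finset.range d, f.coeff t * s (j - d + t) = 0 := by
        intro t ht
        rw [Finset.mem_range] at ht
        have : s (j - d + t) = 0 := ih _ (by omega)
        rw [this, mul_zero]
      rw [Finset.sum_eq_zero h1, zero_add, hf.coeff_natDegree, one_mul] at hz
      have : j - d + d = j := by omega
      rw [← hd, this] at hz
      simpa using hz

noncomputable def mkSeq {F : Type*} [Field F] (d : ℕ) (c : ℕ → F) (a : Fin d → F) : ℕ → F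
  | j =>
    if h : j < d then a ⟨j, h⟩
    else -∑ t : Fin d, c t.1 * mkSeq d c a (j - d + t.1)
termination_by j => j
decreasing_by
  have := t.2
  omega

lemma mkSeq_init {F : Type*} [Field F] (d : ℕ) (c : ℕ → F) (a : Fin d → F) (j : Fin d) :
    mkSeq d c a j.1 = a j := by
  rw [mkSeq, dif_pos j.2]

lemma mkSeq_mem {F : Type*} [Field F] (f : Polynomial F) (hf : f.Monic) (a : Fin f.natDegree → F) :
    mkSeq f.natDegree f.coeff a ∈ OmegaSet f := by
  funext i
  rw [polyL_apply, Finset.sum_range_succ]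
  have hne : ¬ (i + f.natDegree < f.natDegree) := by omega
  have hrec : mkSeq f.natDegree f.coeff a (i + f.natDegree) =
      -∑ t : Fin f.natDegree, f.coeff t.1 * mkSeq f.natDegree f.coeff a (i + t.1) := by
    rw [mkSeq, dif_neg hne]
    congr 1
    apply Finset.sum_congr rfl
    intro t _
    congr 2
    omega
  rw [hrec, hf.coeff_natDegree, one_mul]
  rw [← Finset.sum_range (fun t => f.coeff t * mkSeq f.natDegree f.coeff a (i + t))]
  simp

lemma omega_sub {F : Type*} [Field F] (f : Polynomial F) {s s' : ℕ → F}
    (hs : s ∈ OmegaSet f) (hs' : s' ∈ OmegaSet f) : s - s' ∈ OmegaSet f := by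
  have : polyL f (s - s') = polyL f s - polyL f s' := map_sub _ _ _
  simp only [OmegaSet, Set.mem_setOf_eq] at *
  rw [this, hs, hs', sub_zero]

lemma omega_eq_of_init {F : Type*} [Field F] (f : Polynomial F) (hf : f.Monic) {s s' : ℕ → F}
    (hs : s ∈ OmegaSet f) (hs' : s' ∈ OmegaSet f)
    (h : ∀ j, j < f.natDegree → s j = s' j) : s = s' := by
  have := omega_unique_zero f hf (s - s') (omega_sub f hs hs')
    (fun j hj => by simp [h j hj])
  funext j
  have := congrFun this j
  simp only [Pi.sub_apply, Pi.zero_apply, sub_eq_zero] at this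
  exact this

lemma mkSeq_unique {F : Type*} [Field F] (f : Polynomial F) (hf : f.Monic)
    (a : Fin f.natDegree → F) {s : ℕ → F} (hs : s ∈ OmegaSet f)
    (hinit : ∀ j : Fin f.natDegree, s j.1 = a j) :
    s = mkSeq f.natDegree f.coeff a :=
  omega_eq_of_init f hf hs (mkSeq_mem f hf a)
    (fun j hj => by rw [hinit ⟨j, hj⟩, mkSeq_init f.natDegree f.coeff a ⟨j, hj⟩])

lemma mkSeq_add {F : Type*} [Field F] (f : Polynomial F) (hf : f.Monic)
    (a a' : Fin f.natDegree → F) :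
    mkSeq f.natDegree f.coeff (a + a') =
      mkSeq f.natDegree f.coeff a + mkSeq f.natDegree f.coeff a' := by
  symm
  apply mkSeq_unique f hf
  · show polyL f _ = 0
    rw [map_add]
    rw [mkSeq_mem f hf a, mkSeq_mem f hf a', add_zero]
  · intro j
    simp [mkSeq_init f.natDegree f.coeff _ j]

lemma mkSeq_smul {F : Type*} [Field F] (f : Polynomial F) (hf : f.Monic)
    (c : F) (a : Fin f.natDegree → F) :
    mkSeq f.natDegree f.coeff (c • a) = c • mkSeq f.natDegree f.coeff a := by
  symm
  apply mkSeq_unique f hf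
  · show polyL f _ = 0
    rw [map_smul]
    rw [mkSeq_mem f hf a, smul_zero]
  · intro j
    simp [mkSeq_init f.natDegree f.coeff _ j]

lemma omega_mul_left {F : Type*} [Field F] (p q : Polynomial F) {s : ℕ → F}
    (hs : s ∈ OmegaSet q) : s ∈ OmegaSet (p * q) := by
  show polyL _ s = 0
  rw [polyL_mul, hs, map_zero]

lemma sum_zero_coprime {F : Type*} [Field F] {k : ℕ} (f : Fin k → Polynomial F)
    (hcop : ∀ i j, i ≠ j → IsCoprime (f i) (f j))
    (s : Fin k → (ℕ → F)) (hs : ∀ i, s i ∈ OmegaSet (f i))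
    (hsum : (∑ i, s i) = 0) : ∀ i, s i = 0 := by
  intro i
  set P := ∏ j ∈ Finset.univ.erase i, f j with hP
  have hcP : IsCoprime (f i) P := by
    apply IsCoprime.prod_right
    intro j hj
    exact hcop i j (fun h => (Finset.mem_erase.mp hj).1 h.symm)
  have hPz : polyL P (s i) = 0 := by
    have h1 : polyL P (∑ j, s j) = 0 := by rw [hsum, map_zero]
    have h2 : polyL P (∑ j, s j) = ∑ j, polyL P (s j) := map_sum _ _ _
    have h3 : ∀ j ∈ Finset.univ.erase i, polyL P (s j) = 0 := by
      intro j hj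
      have hPj : P = f j * ∏ m ∈ (Finset.univ.erase i).erase j, f m :=
        (Finset.mul_prod_erase _ _ hj).symm
      rw [hPj, mul_comm, polyL_mul, hs j, map_zero]
    have h4 : (∑ j, polyL P (s j)) =
        polyL P (s i) + ∑ j ∈ Finset.univ.erase i, polyL P (s j) :=
      (Finset.add_sum_erase _ _ (Finset.mem_univ i)).symm
    rw [h2, h4, Finset.sum_eq_zero h3, add_zero] at h1
    exact h1
  obtain ⟨u, v, huv⟩ := hcP
  have : polyL (u * f i + v * P) (s i) = s i := by
    rw [huv]
    show polyL 1 (s i) = s i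
    rw [polyL, map_one]
    rfl
  have hadd : polyL (u * f i + v * P) (s i) = polyL (u * f i) (s i) + polyL (v * P) (s i) := by
    rw [polyL, polyL, polyL, map_add]; rfl
  rw [hadd, polyL_mul, hs i, map_zero, polyL_mul, hPz, map_zero] at this
  simpa using this.symm

lemma mkSeq_mem' {F : Type*} [Field F] (f : Polynomial F) (hf : f.Monic) {d : ℕ}
    (hd : f.natDegree = d) (a : Fin d → F) : mkSeq d f.coeff a ∈ OmegaSet f := by
  subst hd; exact mkSeq_mem f hf a

lemma mkSeq_unique' {F : Type*} [Field F] (f : Polynomial F) (hf : f.Monic) {d : ℕ}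
    (hd : f.natDegree = d) (a : Fin d → F) {s : ℕ → F} (hs : s ∈ OmegaSet f)
    (hinit : ∀ j : Fin d, s j.1 = a j) : s = mkSeq d f.coeff a := by
  subst hd; exact mkSeq_unique f hf a hs hinit

lemma mkSeq_add' {F : Type*} [Field F] (f : Polynomial F) (hf : f.Monic) {d : ℕ}
    (hd : f.natDegree = d) (a a' : Fin d → F) :
    mkSeq d f.coeff (a + a') = mkSeq d f.coeff a + mkSeq d f.coeff a' := by
  subst hd; exact mkSeq_add f hf a a'

lemma mkSeq_smul' {F : Type*} [Field F] (f : Polynomial F) (hf : f.Monic) {d : ℕ}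
    (hd : f.natDegree = d) (c : F) (a : Fin d → F) :
    mkSeq d f.coeff (c • a) = c • mkSeq d f.coeff a := by
  subst hd; exact mkSeq_smul f hf c a

/-- the `F_q`-linear map sending a tuple of initial states
`(a₁, …, a_k) ∈ F_q^{n₁'} × ⋯ × F_q^{n_k'}` to the first `n` entries of
`seq₁(a₁) + ⋯ + seq_k(a_k)` is a linear isomorphism, where `seqᵢ(aᵢ)` is the unique
sequence of `Ω(gᵢ^{bᵢ})` whose first `nᵢ'` entries are `aᵢ`. -/
theorem stmt15 {F : Type*} [Field F] [Fintype F] (k : ℕ)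
    (g : Fin k → Polynomial F) (b : Fin k → ℕ)
    (hmonic : ∀ i, (g i).Monic) (hirr : ∀ i, Irreducible (g i))
    (hg0 : ∀ i, (g i).coeff 0 ≠ 0) (hdist : Function.Injective g)
    (hb : ∀ i, 1 ≤ b i)
    (n' : Fin k → ℕ) (hn' : ∀ i, n' i = b i * (g i).natDegree)
    (n : ℕ) (hn : n = ∑ i, n' i) :
    ∃ Φ : ((i : Fin k) → (Fin (n' i) → F)) ≃ₗ[F] (Fin n → F),
      ∀ (a : (i : Fin k) → (Fin (n' i) → F)) (s : Fin k → (ℕ → F)),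
        (∀ i, s i ∈ OmegaSet ((g i) ^ (b i)) ∧ ∀ j : Fin (n' i), s i j.1 = a i j) →
        ∀ j : Fin n, Φ a j = (∑ i, s i) j.1 := by
  set f : Fin k → Polynomial F := fun i => (g i) ^ (b i) with hf
  have hfm : ∀ i, (f i).Monic := fun i => (hmonic i).pow (b i)
  have hfd : ∀ i, (f i).natDegree = n' i := by
    intro i
    rw [hf, Polynomial.natDegree_pow, hn' i]
  -- the candidate linear map
  set T : ((i : Fin k) → (Fin (n' i) → F)) →ₗ[F] (Fin n → F) :=
    { toFun := fun a j => ∑ i, mkSeq (n' i) ((f i).coeff) (a i) j.1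
      map_add' := by
        intro a a'
        funext j
        simp only [Pi.add_apply]
        rw [← Finset.sum_add_distrib]
        apply Finset.sum_congr rfl
        intro i _
        rw [mkSeq_add' (f i) (hfm i) (hfd i)]
        rfl
      map_smul' := by
        intro c a
        funext j
        simp only [RingHom.id_apply, Pi.smul_apply]
        rw [Finset.smul_sum]
        apply Finset.sum_congr rfl
        intro i _
        rw [mkSeq_smul' (f i) (hfm i) (hfd i)]
        rfl } with hT
  -- pairwise coprimality
  have hcop : ∀ i j, i ≠ j → IsCoprime (f i) (f j) := by
    intro i j hij
    have hbase : IsCoprime (g i) (g j) := by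
      rw [(hirr i).coprime_iff_not_dvd]
      intro hdvd
      have hassoc : Associated (g i) (g j) :=
        (hirr i).associated_of_dvd (hirr j) hdvd
      exact hij (hdist (Polynomial.eq_of_monic_of_associated (hmonic i) (hmonic j) hassoc))
    exact hbase.pow
  -- product polynomial
  set P : Polynomial F := ∏ i, f i with hPdef
  have hPm : P.Monic := Polynomial.monic_prod_of_monic _ _ (fun i _ => hfm i)
  have hPd : P.natDegree = n := by
    rw [hPdef, Polynomial.natDegree_prod _ _ (fun i _ => (hfm i).ne_zero), hn]
    exact Finset.sum_congr rfl (fun i _ => hfd i)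
  -- injectivity
  have hinj : Function.Injective T := by
    rw [← LinearMap.ker_eq_bot, LinearMap.ker_eq_bot']
    intro a ha
    set s : Fin k → (ℕ → F) := fun i => mkSeq (n' i) ((f i).coeff) (a i) with hsdef
    have hmem : ∀ i, s i ∈ OmegaSet (f i) := fun i => mkSeq_mem' (f i) (hfm i) (hfd i) (a i)
    have hmemP : ∀ i, s i ∈ OmegaSet P := by
      intro i
      have : P = (∏ m ∈ Finset.univ.erase i, f m) * f i := by
        rw [mul_comm, hPdef]
        exact (Finset.mul_prod_erase _ _ (Finset.mem_univ i)).symm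
      rw [this]
      exact omega_mul_left _ _ (hmem i)
    have hSmem : (∑ i, s i) ∈ OmegaSet P := by
      show polyL P (∑ i, s i) = 0
      rw [map_sum]
      exact Finset.sum_eq_zero (fun i _ => hmemP i)
    have hS0 : (∑ i, s i) = 0 := by
      apply omega_unique_zero P hPm _ hSmem
      intro j hj
      rw [hPd] at hj
      have := congrFun ha ⟨j, hj⟩
      rw [Finset.sum_apply]
      exact this
    have hsz := sum_zero_coprime f hcop s hmem hS0
    funext i j
    have : s i j.1 = a i j := mkSeq_init (n' i) ((f i).coeff) (a i) j
    rw [← this, hsz i]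
    rfl
  -- surjectivity via dimension count
  have hfr : Module.finrank F ((i : Fin k) → (Fin (n' i) → F)) =
      Module.finrank F (Fin n → F) := by
    rw [Module.finrank_pi_fintype F]
    simp [Module.finrank_fin_fun, hn]
  have hsurj : Function.Surjective T :=
    (LinearMap.injective_iff_surjective_of_finrank_eq_finrank hfr).mp hinj
  refine ⟨LinearEquiv.ofBijective T ⟨hinj, hsurj⟩, ?_⟩
  intro a s hs j
  have hseq : ∀ i, s i = mkSeq (n' i) ((f i).coeff) (a i) := fun i =>
    mkSeq_unique' (f i) (hfm i) (hfd i) (a i) (hs i).1 (hs i).2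
  show T a j = (∑ i, s i) j.1
  rw [Finset.sum_apply]
  have hTa : T a j = ∑ i, mkSeq (n' i) ((f i).coeff) (a i) j.1 := rfl
  rw [hTa]
  exact Finset.sum_congr rfl (fun i _ => (congrFun (hseq i) j.1).symm)
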